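/- Let k ∈ ℂ and let y : (0,∞) → ℂ be C² with y''(t) = k·t·y'(t) − k·y(t) for all t > 0. Set z(t) := y(t)/t. Then the function t ↦ t²·e^{−kt²/2}·z'(t) is constant on (0,∞); equivalently, there is c₂ ∈ ℂ with z'(t) = c₂·t^{−2}·e^{kt²/2} for all t > 0. -/

import Mathlib

noncomputable section

/-- Quadrature for the homogeneous equation `y'' = k·t·y' − k·y` on `(0,∞)`: with
`z(t) := y(t)/t`, the function `t ↦ t²·e^{−kt²/2}·z'(t)` is constant, i.e. there is
`c₂ ∈ ℂ` with `z'(t) = c₂·t⁻²·e^{kt²/2}` for all `t > 0`. -/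
theorem stmt_9 (k : ℂ) (y : ℝ → ℂ) (hy : ContDiffOn ℝ 2 y (Set.Ioi (0 : ℝ)))
    (hode : ∀ t : ℝ, 0 < t →
        iteratedDeriv 2 y t = k * t * deriv y t - k * y t) :
    (∀ s : ℝ, 0 < s → ∀ t : ℝ, 0 < t →
        (s : ℂ) ^ 2 * Complex.exp (-k * s ^ 2 / 2) * deriv (fun u : ℝ => y u / u) s =
          (t : ℂ) ^ 2 * Complex.exp (-k * t ^ 2 / 2) * deriv (fun u : ℝ => y u / u) t) ∧
      ∃ c₂ : ℂ, ∀ t : ℝ, 0 < t →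
        deriv (fun u : ℝ => y u / u) t = c₂ * ((t : ℂ) ^ 2)⁻¹ * Complex.exp (k * t ^ 2 / 2) := by
  have hopen : IsOpen (Set.Ioi (0 : ℝ)) := isOpen_Ioi
  have hy1 : ContDiffOn ℝ 1 (deriv y) (Set.Ioi 0) := hy.deriv_of_isOpen hopen (by norm_num)
  have hdy : ∀ t : ℝ, 0 < t → HasDerivAt y (deriv y t) t := fun t ht =>
    ((hy.differentiableOn (by norm_num)).differentiableAt
      (hopen.mem_nhds ht)).hasDerivAt
  have hddy : ∀ t : ℝ, 0 < t → HasDerivAt (deriv y) (deriv (deriv y) t) t := fun t ht =>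
    ((hy1.differentiableOn (by norm_num)).differentiableAt (hopen.mem_nhds ht)).hasDerivAt
  have hofReal : ∀ t : ℝ, HasDerivAt (fun u : ℝ => (u : ℂ)) 1 t := fun t => by
    have := Complex.ofRealCLM.hasDerivAt (x := t); simp at this ⊢; exact this
  -- derivative of z = y/t
  have hz : ∀ t : ℝ, 0 < t → HasDerivAt (fun u : ℝ => y u / u)
      ((deriv y t * t - y t * 1) / (t : ℂ) ^ 2) t := fun t ht => by
    exact (hdy t ht).div (hofReal t) (by exact_mod_cast ht.ne')
  have hzderiv : ∀ t : ℝ, 0 < t → deriv (fun u : ℝ => y u / u) t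
      = (deriv y t * t - y t) / (t : ℂ) ^ 2 := fun t ht => by
    simpa using (hz t ht).deriv
  -- the conserved quantity
  set w : ℝ → ℂ := fun t => Complex.exp (-k * t ^ 2 / 2) * ((t : ℂ) * deriv y t - y t) with hw
  have hwderiv : ∀ t : ℝ, 0 < t → HasDerivAt w 0 t := by
    intro t ht
    have hexp : HasDerivAt (fun u : ℝ => Complex.exp (-k * (u : ℂ) ^ 2 / 2))
        (Complex.exp (-k * t ^ 2 / 2) * (-k * t)) t := by
      have hsq : HasDerivAt (fun u : ℝ => (u : ℂ) ^ 2) (2 * t) t := by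
        have := (hofReal t).mul (hofReal t)
        simp [pow_two, two_mul] at this ⊢; exact this
      have h1 : HasDerivAt (fun u : ℝ => -k * (u : ℂ) ^ 2 / 2) (-k * t) t := by
        have := (hsq.const_mul (-k)).div_const 2
        convert this using 1
        all_goals first | rfl | ring
      have := (Complex.hasDerivAt_exp _).comp t h1
      simp [mul_comm] at this ⊢; exact this
    have h2 : HasDerivAt (fun u : ℝ => (u : ℂ) * deriv y u - y u)
        ((1 : ℂ) * deriv y t + t * deriv (deriv y) t - deriv y t) t :=
      ((hofReal t).mul (hddy t ht)).sub (hdy t ht)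
    have h3 := hexp.mul h2
    convert h3 using 1
    all_goals try rfl
    have h4 : deriv (deriv y) t = k * t * deriv y t - k * y t := by
      rw [← hode t ht, iteratedDeriv_succ, iteratedDeriv_one]
    rw [h4]; ring
  have hconst : ∀ s : ℝ, 0 < s → ∀ t : ℝ, 0 < t → w s = w t := by
    intro s hs t ht
    apply (convex_Ioi (0:ℝ)).is_const_of_fderivWithin_eq_zero
      (fun x hx => ((hwderiv x hx).differentiableAt.differentiableWithinAt)) _ hs ht
    intro x hx
    have : fderivWithin ℝ w (Set.Ioi 0) x = fderiv ℝ w x :=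
      fderivWithin_of_isOpen hopen hx
    rw [this, (hwderiv x hx).hasFDerivAt.fderiv]
    ext
    simp
  have key : ∀ t : ℝ, 0 < t →
      (t : ℂ) ^ 2 * Complex.exp (-k * t ^ 2 / 2) * deriv (fun u : ℝ => y u / u) t = w t := by
    intro t ht
    rw [hzderiv t ht, hw]
    have ht0 : (t : ℂ) ≠ 0 := by exact_mod_cast ht.ne'
    field_simp
  constructor
  · intro s hs t ht
    rw [key s hs, key t ht]
    exact hconst s hs t ht
  · refine ⟨w 1, fun t ht => ?_⟩
    have h1 := key t ht
    have := hconst t ht 1 one_pos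
    rw [this] at h1
    have ht0 : (t : ℂ) ≠ 0 := by exact_mod_cast ht.ne'
    have hexp0 : Complex.exp (-k * t ^ 2 / 2) ≠ 0 := Complex.exp_ne_zero _
    have : deriv (fun u : ℝ => y u / u) t
        = w 1 * ((t:ℂ)^2 * Complex.exp (-k * t ^ 2 / 2))⁻¹ := by
      field_simp at h1 ⊢
      linear_combination h1
    rw [this, mul_inv, ← Complex.exp_neg,
      show -(-k * (t:ℂ) ^ 2 / 2) = k * (t:ℂ) ^ 2 / 2 by ring]
    ring
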